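/- arXiv:1804.03038 — 5 statements merged into one kernel-verified Lean document; each statement's English description precedes it below -/
import Mathlib

section
/- Let a > 0 and b > 0, and let p(z) = z^(a−1)·(1−z)^(b−1)/B(a,b) for z ∈ (0,1), where B(a,b) is the Beta function. Then for every z ∈ (0,1), 2·∫_0^z (a/(a+b) − t)·p(t) dt = (2/(a+b))·z·(1−z)·p(z). (Equivalently, with drift μ(z) = −(z − a/(a+b)), the relationship σ²(z) = 2(∫_0^z μ(t)p(t)dt)/p(z) yields σ²(z) = (2/(a+b))·z(1−z).) -/
open Set Real

/-- Table I, Beta entry: for the Beta density `p(z) = z^(a-1)(1-z)^(b-1)/B(a,b)` on `(0,1)`,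
`2·∫_0^z (a/(a+b) - t)·p(t) dt = (2/(a+b))·z(1-z)·p(z)`, i.e. drift
`μ(z) = -(z - a/(a+b))` yields diffusion `σ²(z) = (2/(a+b))·z(1-z)`. -/
theorem beta_ito_diffusion (a b : ℝ) (ha : 0 < a) (hb : 0 < b) :
    ∀ z ∈ Ioo (0 : ℝ) 1,
      2 * ∫ t in (0:ℝ)..z,
          (a / (a + b) - t) *
            (t ^ (a - 1) * (1 - t) ^ (b - 1) /
              (Real.Gamma a * Real.Gamma b / Real.Gamma (a + b))) =
      (2 / (a + b)) * z * (1 - z) *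
        (z ^ (a - 1) * (1 - z) ^ (b - 1) /
          (Real.Gamma a * Real.Gamma b / Real.Gamma (a + b))) := by
  intro z hz
  obtain ⟨hz0, hz1⟩ := hz
  set B : ℝ := Real.Gamma a * Real.Gamma b / Real.Gamma (a + b) with hB
  have hab : 0 < a + b := by linarith
  have hBpos : 0 < B :=
    div_pos (mul_pos (Real.Gamma_pos_of_pos ha) (Real.Gamma_pos_of_pos hb))
      (Real.Gamma_pos_of_pos hab)
  set f : ℝ → ℝ := fun t => (a / (a + b) - t) * (t ^ (a - 1) * (1 - t) ^ (b - 1) / B) with hf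
  set F : ℝ → ℝ := fun t => t ^ a * (1 - t) ^ b / ((a + b) * B) with hF
  -- continuity of F on [0, z]
  have hcontF : ContinuousOn F (Icc 0 z) := by
    apply ContinuousOn.div_const
    apply ContinuousOn.mul
    · intro x _
      exact (Real.continuousAt_rpow_const x a (Or.inr ha.le)).continuousWithinAt
    · intro x hx
      refine ContinuousAt.continuousWithinAt ?_
      exact (Real.continuousAt_rpow_const (1 - x) b (Or.inr hb.le)).comp
        ((continuous_const.sub continuous_id).continuousAt)
  -- derivative of F on (0, z)
  have hderiv : ∀ x ∈ Ioo (0:ℝ) z, HasDerivWithinAt F (f x) (Ioi x) x := by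
    intro x hx
    have hx0 : 0 < x := hx.1
    have hx1 : x < 1 := lt_trans hx.2 hz1
    have h1x : 0 < 1 - x := by linarith
    have d1 : HasDerivAt (fun t : ℝ => t ^ a) (a * x ^ (a - 1)) x :=
      Real.hasDerivAt_rpow_const (Or.inl hx0.ne')
    have d2 : HasDerivAt (fun t : ℝ => (1 - t) ^ b) (b * (1 - x) ^ (b - 1) * (-1)) x := by
      have dinner : HasDerivAt (fun t : ℝ => 1 - t) (-1) x := by
        simpa using (hasDerivAt_id x).const_sub 1
      exact (Real.hasDerivAt_rpow_const (x := 1 - x) (p := b) (Or.inl h1x.ne')).comp x dinner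
    have d3 : HasDerivAt F ((a * x ^ (a - 1) * (1 - x) ^ b +
        x ^ a * (b * (1 - x) ^ (b - 1) * (-1))) / ((a + b) * B)) x :=
      (d1.mul d2).div_const _
    have heq : (a * x ^ (a - 1) * (1 - x) ^ b +
        x ^ a * (b * (1 - x) ^ (b - 1) * (-1))) / ((a + b) * B) = f x := by
      have hxa : x ^ a = x ^ (a - 1) * x := by
        rw [← Real.rpow_add_one hx0.ne']; ring_nf
      have hxb : (1 - x) ^ b = (1 - x) ^ (b - 1) * (1 - x) := by
        rw [← Real.rpow_add_one h1x.ne']; ring_nf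
      rw [hxa, hxb, hf]
      field_simp
      ring
    rw [← heq]
    exact d3.hasDerivWithinAt
  -- interval integrability of f
  have hint : IntervalIntegrable f MeasureTheory.volume 0 z := by
    have h1 : IntervalIntegrable (fun t : ℝ => t ^ (a - 1)) MeasureTheory.volume 0 z :=
      intervalIntegral.intervalIntegrable_rpow' (by linarith)
    have h2 : ContinuousOn (fun t : ℝ => (a / (a + b) - t) * (1 - t) ^ (b - 1) / B)
        (uIcc (0:ℝ) z) := by
      rw [uIcc_of_le hz0.le]
      apply ContinuousOn.div_const
      apply ContinuousOn.mul
      · exact (continuous_const.sub continuous_id).continuousOn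
      · intro x hx
        have : 1 - x ≠ 0 := by
          have := hx.2; have : x < 1 := lt_of_le_of_lt hx.2 hz1; linarith
        exact ((Real.continuousAt_rpow_const (1 - x) (b - 1) (Or.inl this)).comp
          ((continuous_const.sub continuous_id).continuousAt)).continuousWithinAt
    have := h1.mul_continuousOn h2
    apply this.congr
    intro t _
    simp only [hf]
    ring
  have hFTC := intervalIntegral.integral_eq_sub_of_hasDeriv_right_of_le hz0.le hcontF
    hderiv hint
  have hF0 : F 0 = 0 := by
    simp [hF, Real.zero_rpow ha.ne']
  rw [hFTC, hF0, sub_zero]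
  have hza : z ^ a = z ^ (a - 1) * z := by
    rw [← Real.rpow_add_one hz0.ne']; ring_nf
  have hzb : (1 - z) ^ b = (1 - z) ^ (b - 1) * (1 - z) := by
    rw [← Real.rpow_add_one (by linarith : (1:ℝ) - z ≠ 0)]; ring_nf
  rw [hF]
  simp only [hza, hzb]
  field_simp
end

section
/- Let a > 0 and b > 0, and let p(z) = b^a·z^(a−1)·exp(−b·z)/Γ(a) for z > 0, where Γ is the Gamma function. Then for every z > 0, 2·∫_0^z (a/b − t)·p(t) dt = (2z/b)·p(z). (Equivalently, with drift μ(z) = −(z − a/b), the relationship σ²(z) = 2(∫_0^z μ(t)p(t)dt)/p(z) yields σ²(z) = 2z/b.) -/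
open Set Real

/-- Table I, Gamma entry: for the Gamma density `p(z) = b^a z^(a-1) e^{-bz}/Γ(a)` on `(0,∞)`,
`2·∫_0^z (a/b - t)·p(t) dt = (2z/b)·p(z)`, i.e. drift `μ(z) = -(z - a/b)` yields
diffusion `σ²(z) = 2z/b`. -/
theorem gamma_ito_diffusion (a b : ℝ) (ha : 0 < a) (hb : 0 < b) :
    ∀ z : ℝ, 0 < z →
      2 * ∫ t in (0:ℝ)..z,
          (a / b - t) * (b ^ a * t ^ (a - 1) * Real.exp (-b * t) / Real.Gamma a) =
      (2 * z / b) * (b ^ a * z ^ (a - 1) * Real.exp (-b * z) / Real.Gamma a) := by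
  intro z hz
  have hΓ : 0 < Real.Gamma a := Real.Gamma_pos_of_pos ha
  set c : ℝ := b ^ a / (b * Real.Gamma a) with hc
  set F : ℝ → ℝ := fun t => c * (t ^ a * Real.exp (-b * t)) with hF
  set f : ℝ → ℝ := fun t =>
    (a / b - t) * (b ^ a * t ^ (a - 1) * Real.exp (-b * t) / Real.Gamma a) with hf
  -- continuity of F on [0adaptz]
  have hFc : ContinuousOn F (Set.Icc 0 z) := by
    apply ContinuousOn.mul continuousOn_const
    apply ContinuousOn.mul ?_ (Continuous.continuousOn (by continuity))
    intro t ht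
    exact (Real.continuousAt_rpow_const t a (Or.inr ha.le)).continuousWithinAt
  -- derivative
  have hderiv : ∀ x ∈ Set.Ioo 0 z, HasDerivAt F (f x) x := by
    intro x hx
    have hx0 : x ≠ 0 := hx.1.ne'
    have h1 : HasDerivAt (fun t : ℝ => t ^ a) (a * x ^ (a - 1)) x :=
      Real.hasDerivAt_rpow_const (Or.inl hx0)
    have h2 : HasDerivAt (fun t : ℝ => Real.exp (-b * t)) (Real.exp (-b * x) * (-b)) x := by
      have := (Real.hasDerivAt_exp (-b * x)).comp x ((hasDerivAt_id x).const_mul (-b))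
      simpa [Function.comp_def, mul_comm] using this
    have h3 : HasDerivAt (fun y => c * (y ^ a * Real.exp (-b * y)))
        (c * (a * x ^ (a - 1) * Real.exp (-b * x) + x ^ a * (Real.exp (-b * x) * -b))) x :=
      ((h1.mul h2).const_mul c)
    convert h3 using 1
    have hxa : x ^ a = x ^ (a - 1) * x := by
      rw [← Real.rpow_add_one hx0 (a - 1)]; ring_nf
    simp only [hf, hc, hxa]
    field_simp
    ring
  -- integrability of f
  have hint : IntervalIntegrable f MeasureTheory.volume 0 z := by
    have h1 : IntervalIntegrable (fun t : ℝ => t ^ (a - 1)) MeasureTheory.volume 0 z :=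
      intervalIntegral.intervalIntegrable_rpow' (by linarith)
    have h2 := h1.continuousOn_mul
      (g := fun t : ℝ => (a / b - t) * (b ^ a * Real.exp (-b * t) / Real.Gamma a))
      (Continuous.continuousOn (by continuity))
    convert h2 using 1
    funext t
    simp only [hf]
    ring
  have key := intervalIntegral.integral_eq_sub_of_hasDerivAt_of_le hz.le hFc hderiv hint
  have hF0 : F 0 = 0 := by
    simp [hF, Real.zero_rpow ha.ne']
  rw [show (∫ t in (0:ℝ)..z, (a / b - t) *
      (b ^ a * t ^ (a - 1) * Real.exp (-b * t) / Real.Gamma a)) = ∫ t in (0:ℝ)..z, f t from rfl,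
    key, hF0, sub_zero]
  have hza : z ^ a = z ^ (a - 1) * z := by
    rw [← Real.rpow_add_one hz.ne' (a - 1)]; ring_nf
  simp only [hF, hc, hza]
  field_simp
end

section
/- Let a ∈ ℝ and b > 0, and let p(z) = exp(−|z−a|/b)/(2b) be the Laplace density with location a and scale b. Then for every z ∈ ℝ, 2·∫_{−∞}^z (a − t)·p(t) dt = (2b·|z−a| + 2b²)·p(z). (Equivalently, with drift μ(z) = −(z−a), the relationship σ²(z) = 2(∫_{−∞}^z μ(t)p(t)dt)/p(z) yields σ²(z) = 2b|z−a| + 2b².) -/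
open MeasureTheory Set Real

private lemma lap_hasDerivAt (a b : ℝ) (hb : 0 < b) (t : ℝ) :
    HasDerivAt (fun t => (a - t + b) * Real.exp ((t - a) / b) / 2)
      ((a - t) * Real.exp ((t - a) / b) / (2 * b)) t := by
  have h1 : HasDerivAt (fun t : ℝ => a - t + b) (-1) t := by
    simpa using ((hasDerivAt_id t).const_sub a).add_const b
  have h2 : HasDerivAt (fun t : ℝ => Real.exp ((t - a) / b))
      (Real.exp ((t - a) / b) * (1 / b)) t := by
    have : HasDerivAt (fun t : ℝ => (t - a) / b) (1 / b) t := by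
      simpa using ((hasDerivAt_id t).sub_const a).div_const b
    exact (Real.hasDerivAt_exp _).comp t this
  have := (h1.mul h2).div_const 2
  refine this.congr_deriv ?_
  field_simp
  ring

private lemma lap_hasDerivAt' (a b : ℝ) (hb : 0 < b) (t : ℝ) :
    HasDerivAt (fun t => (t - a + b) * Real.exp (-(t - a) / b) / 2)
      ((a - t) * Real.exp (-(t - a) / b) / (2 * b)) t := by
  have h1 : HasDerivAt (fun t : ℝ => t - a + b) 1 t := by
    simpa using ((hasDerivAt_id t).sub_const a).add_const b
  have h2 : HasDerivAt (fun t : ℝ => Real.exp (-(t - a) / b))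
      (Real.exp (-(t - a) / b) * (-1 / b)) t := by
    have : HasDerivAt (fun t : ℝ => -(t - a) / b) (-1 / b) t := by
      simpa using (((hasDerivAt_id t).sub_const a).neg).div_const b
    exact (Real.hasDerivAt_exp _).comp t this
  have := (h1.mul h2).div_const 2
  refine this.congr_deriv ?_
  field_simp
  ring

private lemma lap_tendsto (a b : ℝ) (hb : 0 < b) :
    Filter.Tendsto (fun t => (a - t + b) * Real.exp ((t - a) / b) / 2)
      Filter.atBot (nhds 0) := by
  have key : Filter.Tendsto (fun u : ℝ => b * (u + 1) * Real.exp (-u) / 2)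
      Filter.atTop (nhds 0) := by
    have h1 : Filter.Tendsto (fun u : ℝ => u * Real.exp (-u)) Filter.atTop (nhds 0) := by
      simpa using Real.tendsto_pow_mul_exp_neg_atTop_nhds_zero 1
    have h2 : Filter.Tendsto (fun u : ℝ => Real.exp (-u)) Filter.atTop (nhds 0) :=
      Real.tendsto_exp_neg_atTop_nhds_zero
    have := ((h1.add h2).const_mul b).div_const 2
    simpa [mul_add, add_mul, mul_comm, mul_assoc, mul_left_comm] using this
  have hcomp : Filter.Tendsto (fun t : ℝ => (a - t) / b) Filter.atBot Filter.atTop := by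
    apply Filter.Tendsto.atTop_div_const hb
    have := Filter.tendsto_atTop_add_const_left (Filter.atBot : Filter ℝ) a
      Filter.tendsto_neg_atBot_atTop
    convert this using 2 with x
    ring
  have := key.comp hcomp
  convert this using 2 with t
  simp only [Function.comp]
  have hbne : b ≠ 0 := ne_of_gt hb
  rw [show (t - a) / b = -((a - t) / b) by ring]
  field_simp
  try ring

private lemma lap_integrableOn (a b : ℝ) (hb : 0 < b) {z : ℝ} (hz : z ≤ a) :
    IntegrableOn (fun t => (a - t) * Real.exp ((t - a) / b) / (2 * b)) (Iic z) := by
  set f := fun t => (a - t) * Real.exp ((t - a) / b) / (2 * b) with hf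
  have hcont : Continuous f := by
    apply Continuous.div_const
    exact (continuous_const.sub continuous_id).mul
      (Real.continuous_exp.comp ((continuous_id.sub continuous_const).div_const b))
  apply integrableOn_Iic_of_intervalIntegral_norm_bounded
    ((a - z + b) * Real.exp ((z - a) / b) / 2) z
    (fun i => hcont.integrableOn_Ioc) Filter.tendsto_id
  filter_upwards [Filter.Iic_mem_atBot z] with i (hi : i ≤ z)
  have heq : ∀ t ∈ uIcc i z, ‖f t‖ = f t := by
    intro t ht
    rw [uIcc_of_le hi] at ht
    apply Real.norm_of_nonneg
    apply div_nonneg _ (by linarith)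
    exact mul_nonneg (by linarith [ht.2]) (Real.exp_pos _).le
  simp only [id]
  rw [intervalIntegral.integral_congr heq,
    intervalIntegral.integral_eq_sub_of_hasDerivAt
      (fun t _ => lap_hasDerivAt a b hb t)
      ((hcont.intervalIntegrable _ _))]
  have hFi : 0 ≤ (a - i + b) * Real.exp ((i - a) / b) / 2 := by
    apply div_nonneg _ (by norm_num)
    exact mul_nonneg (by linarith) (Real.exp_pos _).le
  linarith

private lemma lap_integral_Iic (a b : ℝ) (hb : 0 < b) {z : ℝ} (hz : z ≤ a) :
    ∫ t in Iic z, (a - t) * Real.exp ((t - a) / b) / (2 * b) =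
      (a - z + b) * Real.exp ((z - a) / b) / 2 := by
  have := integral_Iic_of_hasDerivAt_of_tendsto'
    (f := fun t => (a - t + b) * Real.exp ((t - a) / b) / 2)
    (f' := fun t => (a - t) * Real.exp ((t - a) / b) / (2 * b))
    (a := z) (m := 0)
    (fun x _ => lap_hasDerivAt a b hb x) (lap_integrableOn a b hb hz)
    (lap_tendsto a b hb)
  simpa using this

/-- Table I, Laplace entry: for the Laplace density `p(z) = e^{-|z-a|/b}/(2b)`,
`2·∫_{-∞}^z (a - t)·p(t) dt = (2b|z-a| + 2b²)·p(z)`, i.e. drift `μ(z) = -(z-a)`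
yields diffusion `σ²(z) = 2b|z-a| + 2b²`. -/
theorem laplace_ito_diffusion (a b : ℝ) (hb : 0 < b) :
    ∀ z : ℝ,
      2 * ∫ t in Iic z, (a - t) * (Real.exp (-|t - a| / b) / (2 * b)) =
      (2 * b * |z - a| + 2 * b ^ 2) * (Real.exp (-|z - a| / b) / (2 * b)) := by
  intro z
  have hbne : b ≠ 0 := ne_of_gt hb
  rcases le_or_gt z a with hz | hz
  · -- z ≤ a : on Iic z, |t - a| = a - t
    have hcongr : ∫ t in Iic z, (a - t) * (Real.exp (-|t - a| / b) / (2 * b)) =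
        ∫ t in Iic z, (a - t) * Real.exp ((t - a) / b) / (2 * b) := by
      apply setIntegral_congr_fun measurableSet_Iic
      intro t ht
      have : |t - a| = a - t := by
        rw [abs_of_nonpos (by simp at ht; linarith)]; ring
      simp only [this]
      ring
    rw [hcongr, lap_integral_Iic a b hb hz]
    have : |z - a| = a - z := by
      rw [abs_of_nonpos (by linarith)]; ring
    rw [this, show -(a - z) / b = (z - a) / b by ring]
    field_simp
  · -- z > a : split at a
    set g := fun t => (a - t) * (Real.exp (-|t - a| / b) / (2 * b)) with hg
    have hgcont : Continuous g := by
      apply (continuous_const.sub continuous_id).mul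
      apply Continuous.div_const
      exact Real.continuous_exp.comp
        (((continuous_id.sub continuous_const).abs.neg).div_const b)
    have hint1 : IntegrableOn g (Iic a) := by
      apply (lap_integrableOn a b hb le_rfl).congr_fun _ measurableSet_Iic
      intro t ht
      have : |t - a| = a - t := by
        rw [abs_of_nonpos (by simp at ht; linarith)]; ring
      simp only [hg, this]
      ring
    have hint2 : IntegrableOn g (Ioc a z) := hgcont.integrableOn_Ioc
    have hsplit : ∫ t in Iic z, g t = (∫ t in Iic a, g t) + ∫ t in Ioc a z, g t := by
      rw [← setIntegral_union (Iic_disjoint_Ioc le_rfl) measurableSet_Ioc hint1 hint2,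
        Iic_union_Ioc_eq_Iic hz.le]
    have hI1 : ∫ t in Iic a, g t = b / 2 := by
      have hcongr : ∫ t in Iic a, g t =
          ∫ t in Iic a, (a - t) * Real.exp ((t - a) / b) / (2 * b) := by
        apply setIntegral_congr_fun measurableSet_Iic
        intro t ht
        have : |t - a| = a - t := by
          rw [abs_of_nonpos (by simp at ht; linarith)]; ring
        simp only [hg, this]
        ring
      rw [hcongr, lap_integral_Iic a b hb le_rfl]
      simp
    have hI2 : ∫ t in Ioc a z, g t =
        (z - a + b) * Real.exp (-(z - a) / b) / 2 - b / 2 := by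
      rw [← intervalIntegral.integral_of_le hz.le]
      have hcongr : ∀ t ∈ uIcc a z, g t = (a - t) * Real.exp (-(t - a) / b) / (2 * b) := by
        intro t ht
        rw [uIcc_of_le hz.le] at ht
        have : |t - a| = t - a := abs_of_nonneg (by linarith [ht.1])
        simp only [hg, this]
        ring
      rw [intervalIntegral.integral_congr hcongr,
        intervalIntegral.integral_eq_sub_of_hasDerivAt
          (fun t _ => lap_hasDerivAt' a b hb t)]
      · simp
      · apply Continuous.intervalIntegrable
        apply Continuous.div_const
        exact (continuous_const.sub continuous_id).mul
          (Real.continuous_exp.comp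
            (((continuous_id.sub continuous_const).neg).div_const b))
    rw [hsplit, hI1, hI2]
    have : |z - a| = z - a := abs_of_nonneg (by linarith)
    rw [this]
    field_simp
    ring
end

section
/- Let a > 0 and b > 0, and let p(z) = b^a·z^(a−1)·exp(−b·z)/Γ(a) for z > 0, where Γ is the Gamma function. Then for every z > 0, the second derivative of z ↦ (z/b)·p(z) at z equals the first derivative of z ↦ (a/b − z)·p(z) at z; i.e., p satisfies the steady-state Fokker–Planck equation (1/2)·d²/dz²(σ²(z)p(z)) = d/dz(μ(z)p(z)) on (0,∞) with μ(z) = −(z − a/b) and σ²(z) = 2z/b. -/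
open Real Filter Topology

/-- Steady-state Fokker–Planck equation for the Gamma entry of Table I:
with `p(z) = b^a z^(a-1) e^{-bz}/Γ(a)`, `μ(z) = -(z - a/b)` and `σ²(z) = 2z/b`,
we have `(1/2)·(σ²p)'' = (μp)'` on `(0,∞)`, i.e. `((z/b)·p)'' = ((a/b - z)·p)'`. -/
theorem gamma_fokker_planck (a b : ℝ) (ha : 0 < a) (hb : 0 < b) :
    ∀ z : ℝ, 0 < z →
      deriv (deriv
        (fun z => (z / b) * (b ^ a * z ^ (a - 1) * Real.exp (-b * z) / Real.Gamma a))) z =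
      deriv
        (fun z => (a / b - z) * (b ^ a * z ^ (a - 1) * Real.exp (-b * z) / Real.Gamma a)) z := by
  intro z hz
  have hΓ : Real.Gamma a ≠ 0 := (Real.Gamma_pos_of_pos ha).ne'
  set E : ℝ → ℝ := fun x => Real.exp (-b * x) with hE
  -- derivative of the building block x^c * E x
  have hqd : ∀ (c : ℝ) {x : ℝ}, 0 < x →
      HasDerivAt (fun y => y ^ c * E y) ((c * x ^ (c - 1) - b * x ^ c) * E x) x := by
    intro c x hx
    have h1 : HasDerivAt (fun y : ℝ => y ^ c) (c * x ^ (c - 1)) x :=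
      Real.hasDerivAt_rpow_const (Or.inl hx.ne')
    have h0 : HasDerivAt (fun y : ℝ => -b * y) (-b) x := by
      simpa using (hasDerivAt_id x).const_mul (-b)
    have h2 : HasDerivAt E (E x * (-b)) x := by simpa [hE] using h0.exp
    have : HasDerivAt (fun y => y ^ c * E y) (c * x ^ (c - 1) * E x + x ^ c * (E x * -b)) x := h1.mul h2
    convert this using 1
    ring
  have hmem : Set.Ioi (0 : ℝ) ∈ 𝓝 z := Ioi_mem_nhds hz
  have key : ∀ x : ℝ, 0 < x → x * x ^ (a - 1) = x ^ a := by
    intro x hx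
    have h := (Real.rpow_add hx 1 (a - 1)).symm
    rw [Real.rpow_one] at h
    rw [h]
    norm_num
  set K : ℝ := b ^ a / (Real.Gamma a * b) with hK
  set D : ℝ := b ^ a / Real.Gamma a with hD
  -- LHS inner function agrees with K * (x^a * E x) near z
  have heq1 : (fun x => (x / b) * (b ^ a * x ^ (a - 1) * Real.exp (-b * x) / Real.Gamma a))
      =ᶠ[𝓝 z] fun x => K * (x ^ a * E x) := by
    filter_upwards [hmem] with x hx
    rw [hK, hE, ← key x hx]
    field_simp
  -- derivative of the nice form near z
  have hd2 : deriv (fun x => K * (x ^ a * E x)) =ᶠ[𝓝 z]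
      fun x => (K * a) * (x ^ (a - 1) * E x) - (K * b) * (x ^ a * E x) := by
    filter_upwards [hmem] with x hx
    rw [((hqd a hx).const_mul K).deriv]
    ring
  have hL : deriv (deriv
      (fun x => (x / b) * (b ^ a * x ^ (a - 1) * Real.exp (-b * x) / Real.Gamma a))) z =
      deriv (fun x => (K * a) * (x ^ (a - 1) * E x) - (K * b) * (x ^ a * E x)) z :=
    (heq1.deriv.trans hd2).deriv_eq
  have hgL : HasDerivAt (fun x => (K * a) * (x ^ (a - 1) * E x) - (K * b) * (x ^ a * E x))
      ((K * a) * (((a - 1) * z ^ (a - 1 - 1) - b * z ^ (a - 1)) * E z)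
        - (K * b) * ((a * z ^ (a - 1) - b * z ^ a) * E z)) z :=
    ((hqd (a - 1) hz).const_mul (K * a)).sub ((hqd a hz).const_mul (K * b))
  -- RHS function agrees with D*(a/b)*(x^(a-1)*E x) - D*(x^a*E x) near z
  have heq2 : (fun x => (a / b - x) * (b ^ a * x ^ (a - 1) * Real.exp (-b * x) / Real.Gamma a))
      =ᶠ[𝓝 z] fun x => (D * (a / b)) * (x ^ (a - 1) * E x) - D * (x ^ a * E x) := by
    filter_upwards [hmem] with x hx
    rw [hD, hE, ← key x hx]
    field_simp
  have hgR : HasDerivAt (fun x => (D * (a / b)) * (x ^ (a - 1) * E x) - D * (x ^ a * E x))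
      ((D * (a / b)) * (((a - 1) * z ^ (a - 1 - 1) - b * z ^ (a - 1)) * E z)
        - D * ((a * z ^ (a - 1) - b * z ^ a) * E z)) z :=
    ((hqd (a - 1) hz).const_mul (D * (a / b))).sub ((hqd a hz).const_mul D)
  rw [hL, heq2.deriv_eq, hgL.deriv, hgR.deriv, hK, hD]
  field_simp
end

section
/- Let a ∈ ℝ and b > 0, and let p(z) = exp(−|z−a|/b)/(2b) be the Laplace density with location a and scale b. Then for every z ∈ ℝ with z ≠ a, the second derivative of z ↦ (b·|z−a| + b²)·p(z) at z equals the first derivative of z ↦ (a − z)·p(z) at z; i.e., p satisfies the steady-state Fokker–Planck equation (1/2)·d²/dz²(σ²(z)p(z)) = d/dz(μ(z)p(z)) away from z = a, with μ(z) = −(z−a) and σ²(z) = 2b|z−a| + 2b². -/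
open Real

lemma aux_pos (a b : ℝ) (hb : 0 < b) (x : ℝ) :
    HasDerivAt (fun x => (b * (x - a) + b ^ 2) * (Real.exp (-(x - a) / b) / (2 * b)))
      ((a - x) * (Real.exp (-(x - a) / b) / (2 * b))) x := by
  have hu : HasDerivAt (fun x : ℝ => -(x - a) / b) (-(1 : ℝ) / b) x :=
    (((hasDerivAt_id x).sub_const a).neg).div_const b
  have he : HasDerivAt (fun x : ℝ => Real.exp (-(x - a) / b))
      (Real.exp (-(x - a) / b) * (-(1 : ℝ) / b)) x := hu.exp
  have hl : HasDerivAt (fun x : ℝ => b * (x - a) + b ^ 2) b x := by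
    simpa using (((hasDerivAt_id x).sub_const a).const_mul b).add_const (b ^ 2)
  have := hl.mul (he.div_const (2 * b))
  refine this.congr_deriv ?_
  have hb' : b ≠ 0 := ne_of_gt hb
  field_simp
  ring

lemma aux_neg (a b : ℝ) (hb : 0 < b) (x : ℝ) :
    HasDerivAt (fun x => (b * (a - x) + b ^ 2) * (Real.exp ((x - a) / b) / (2 * b)))
      ((a - x) * (Real.exp ((x - a) / b) / (2 * b))) x := by
  have hu : HasDerivAt (fun x : ℝ => (x - a) / b) ((1 : ℝ) / b) x :=
    ((hasDerivAt_id x).sub_const a).div_const b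
  have he : HasDerivAt (fun x : ℝ => Real.exp ((x - a) / b))
      (Real.exp ((x - a) / b) * ((1 : ℝ) / b)) x := hu.exp
  have hl : HasDerivAt (fun x : ℝ => b * (a - x) + b ^ 2) (-b) x := by
    simpa using (((hasDerivAt_id x).const_sub a).const_mul b).add_const (b ^ 2)
  have := hl.mul (he.div_const (2 * b))
  refine this.congr_deriv ?_
  have hb' : b ≠ 0 := ne_of_gt hb
  field_simp
  ring

/-- Steady-state Fokker–Planck equation for the Laplace entry of Table I:
with `p(z) = e^{-|z-a|/b}/(2b)`, `μ(z) = -(z-a)` and `σ²(z) = 2b|z-a| + 2b²`,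
we have `(1/2)·(σ²p)'' = (μp)'` away from `z = a`. -/
theorem laplace_fokker_planck (a b : ℝ) (hb : 0 < b) :
    ∀ z : ℝ, z ≠ a →
      deriv (deriv
        (fun z => (b * |z - a| + b ^ 2) * (Real.exp (-|z - a| / b) / (2 * b)))) z =
      deriv
        (fun z => (a - z) * (Real.exp (-|z - a| / b) / (2 * b))) z := by
  intro z hz
  rcases lt_or_gt_of_ne hz with h | h
  · -- z < a
    have hev : ∀ᶠ x in nhds z, x < a := eventually_lt_nhds h
    set k : ℝ → ℝ := fun x => (a - x) * (Real.exp ((x - a) / b) / (2 * b)) with hk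
    have h1 : (fun z => (b * |z - a| + b ^ 2) * (Real.exp (-|z - a| / b) / (2 * b)))
        =ᶠ[nhds z] (fun x => (b * (a - x) + b ^ 2) * (Real.exp ((x - a) / b) / (2 * b))) :=
      hev.mono fun x hx => by
        simp only [abs_of_neg (sub_neg.2 hx)]; ring_nf
    have h2 : deriv (fun z => (b * |z - a| + b ^ 2) * (Real.exp (-|z - a| / b) / (2 * b)))
        =ᶠ[nhds z] k := by
      filter_upwards [h1.deriv] with x hx
      rw [hx, (aux_neg a b hb x).deriv]
    have h3 : (fun z => (a - z) * (Real.exp (-|z - a| / b) / (2 * b))) =ᶠ[nhds z] k :=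
      hev.mono fun x hx => by
        simp only [abs_of_neg (sub_neg.2 hx), hk]; ring_nf
    rw [h2.deriv_eq, h3.deriv_eq]
  · -- z > a
    have hev : ∀ᶠ x in nhds z, a < x := eventually_gt_nhds h
    set k : ℝ → ℝ := fun x => (a - x) * (Real.exp (-(x - a) / b) / (2 * b)) with hk
    have h1 : (fun z => (b * |z - a| + b ^ 2) * (Real.exp (-|z - a| / b) / (2 * b)))
        =ᶠ[nhds z] (fun x => (b * (x - a) + b ^ 2) * (Real.exp (-(x - a) / b) / (2 * b))) :=
      hev.mono fun x hx => by
        simp only [abs_of_pos (sub_pos.2 hx)]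
    have h2 : deriv (fun z => (b * |z - a| + b ^ 2) * (Real.exp (-|z - a| / b) / (2 * b)))
        =ᶠ[nhds z] k := by
      filter_upwards [h1.deriv] with x hx
      rw [hx, (aux_pos a b hb x).deriv]
    have h3 : (fun z => (a - z) * (Real.exp (-|z - a| / b) / (2 * b))) =ᶠ[nhds z] k :=
      hev.mono fun x hx => by
        simp only [abs_of_pos (sub_pos.2 hx), hk]
    rw [h2.deriv_eq, h3.deriv_eq]
end
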